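/- Let M be a nonnegative k×k matrix satisfying detailed balance π_i m_{ij} = π_j m_{ji} with π_i > 0, and let c_j = Σ_i m_{ij} be the column sums. Then ρ(M) ≥ √( (Σ_j c_j²/π_j) / (Σ_j 1/π_j) ). -/

import Mathlib

/-- The spectral radius of a real square matrix: the supremum of the absolute
values of its complex eigenvalues. -/
noncomputable def specRad {k : ℕ} (M : Matrix (Fin k) (Fin k) ℝ) : ℝ :=
  sSup {x : ℝ | ∃ μ : ℂ, μ ∈ spectrum ℂ (M.map (Complex.ofReal ·)) ∧ x = ‖μ‖}

open Matrix

section Aux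

variable {k : ℕ}

/-- The eigenvalue-norm set is bounded above (spectrum is finite). -/
lemma specSet_bddAbove (M : Matrix (Fin k) (Fin k) ℝ) :
    BddAbove {x : ℝ | ∃ μ : ℂ, μ ∈ spectrum ℂ (M.map (Complex.ofReal ·)) ∧ x = ‖μ‖} := by
  have h : {x : ℝ | ∃ μ : ℂ, μ ∈ spectrum ℂ (M.map (Complex.ofReal ·)) ∧ x = ‖μ‖}
      = (fun μ : ℂ => ‖μ‖) '' (spectrum ℂ (M.map (Complex.ofReal ·))) := by
    ext x
    simp only [Set.mem_setOf_eq, Set.mem_image]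
    constructor
    · rintro ⟨μ, hμ, rfl⟩; exact ⟨μ, hμ, rfl⟩
    · rintro ⟨μ, hμ, rfl⟩; exact ⟨μ, hμ, rfl⟩
  rw [h]
  exact ((Matrix.finite_spectrum _).image _).bddAbove

/-- A real eigenvalue of a matrix similar to `M` (with zero det of `λ•1 - M`)
is a complex eigenvalue of the complexification. -/
lemma mem_complex_spectrum_of_det_eq_zero (M : Matrix (Fin k) (Fin k) ℝ) (lam : ℝ)
    (h : (algebraMap ℝ (Matrix (Fin k) (Fin k) ℝ) lam - M).det = 0) :
    ((lam : ℂ)) ∈ spectrum ℂ (M.map (Complex.ofReal ·)) := by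
  rw [spectrum.mem_iff]
  intro hu
  rw [Matrix.isUnit_iff_isUnit_det] at hu
  have hmap : (algebraMap ℂ (Matrix (Fin k) (Fin k) ℂ) (lam : ℂ) - M.map (Complex.ofReal ·))
      = (algebraMap ℝ (Matrix (Fin k) (Fin k) ℝ) lam - M).map (Complex.ofRealHom : ℝ →+* ℂ) := by
    ext i j
    by_cases hij : i = j <;>
      simp [Matrix.map_apply, Matrix.algebraMap_matrix_apply, hij]
  rw [hmap, ← RingHom.mapMatrix_apply, ← RingHom.map_det, h] at hu
  simp at hu

end Aux

/-- For a nonnegative matrix M satisfying detailed balance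
`π_i m_{ij} = π_j m_{ji}` with `π_i > 0`, and column sums `c_j = Σ_i m_{ij}`,
the spectral radius satisfies
`ρ(M) ≥ √( (Σ_j c_j²/π_j) / (Σ_j 1/π_j) )`. -/
theorem stmt_6 {k : ℕ} (M : Matrix (Fin k) (Fin k) ℝ) (π : Fin k → ℝ)
    (hπ : ∀ i, 0 < π i)
    (hM : ∀ i j, 0 ≤ M i j)
    (hDB : ∀ i j, π i * M i j = π j * M j i) :
    Real.sqrt ((∑ j, (∑ i, M i j) ^ 2 / π j) / (∑ j, 1 / π j)) ≤ specRad M := by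
  rcases Nat.eq_zero_or_pos k with hk | hk
  · subst hk
    have hspec : spectrum ℂ (M.map (Complex.ofReal ·)) = ∅ := by
      ext μ
      simp [spectrum.mem_iff, isUnit_of_subsingleton]
    simp [specRad, hspec, Real.sSup_empty]
  -- notation
  set c : Fin k → ℝ := fun j => ∑ i, M i j with hc
  set s : Fin k → ℝ := fun i => Real.sqrt (π i) with hs
  have hs0 : ∀ i, s i ≠ 0 := fun i => ne_of_gt (Real.sqrt_pos.mpr (hπ i))
  have hss : ∀ i, s i * s i = π i := fun i => Real.mul_self_sqrt (hπ i).le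
  set S : Matrix (Fin k) (Fin k) ℝ := Matrix.of (fun i j => s i * M i j * (s j)⁻¹) with hSdef
  have hSapp : ∀ i j, S i j = s i * M i j * (s j)⁻¹ := fun i j => rfl
  have hS : S.IsHermitian := by
    ext i j
    simp only [Matrix.conjTranspose_apply, star_trivial, hSapp]
    have hi := hs0 i; have hj := hs0 j
    field_simp
    linear_combination M j i * hss j - M i j * hss i - hDB i j
  set x : Fin k → ℝ := fun j => (s j)⁻¹ with hx
  have hSx : S *ᵥ x = fun j => c j * (s j)⁻¹ := by
    funext j
    show ∑ i, S j i * x i = c j * (s j)⁻¹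
    rw [hc]
    simp only [Finset.sum_mul]
    refine Finset.sum_congr rfl fun i _ => ?_
    rw [hSapp, hx]
    have hi := hs0 i; have hj := hs0 j
    field_simp
    linear_combination M j i * hss j - M i j * hss i - hDB i j
  -- spectral theorem data
  set U : Matrix (Fin k) (Fin k) ℝ := (hS.eigenvectorUnitary : Matrix (Fin k) (Fin k) ℝ) with hUdef
  have hU1 : star U * U = 1 := Matrix.mem_unitaryGroup_iff'.mp hS.eigenvectorUnitary.2
  have hU2 : U * star U = 1 := Matrix.mem_unitaryGroup_iff.mp hS.eigenvectorUnitary.2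
  have hstarU : star U = Uᵀ := by
    ext i j
    simp [Matrix.star_apply]
  set lam : Fin k → ℝ := hS.eigenvalues with hlam
  set D : Matrix (Fin k) (Fin k) ℝ := Matrix.diagonal (RCLike.ofReal ∘ lam) with hD
  set y : Fin k → ℝ := star U *ᵥ x with hy
  have hxy : x = U *ᵥ y := by
    rw [hy, Matrix.mulVec_mulVec, hU2, Matrix.one_mulVec]
  have hnorm : ∀ v : Fin k → ℝ, (U *ᵥ v) ⬝ᵥ (U *ᵥ v) = v ⬝ᵥ v := by
    intro v
    rw [dotProduct_mulVec, ← Matrix.mulVec_transpose, Matrix.mulVec_mulVec, ← hstarU,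
      hU1, Matrix.one_mulVec]
  have hSx2 : S *ᵥ x = U *ᵥ (D *ᵥ y) := by
    conv_lhs => rw [hS.spectral_theorem]
    rw [hy, Matrix.mulVec_mulVec, Matrix.mulVec_mulVec]
    rw [Unitary.conjStarAlgAut_apply]
  -- numerator and denominator
  have hnum : ∑ j, c j ^ 2 / π j = (S *ᵥ x) ⬝ᵥ (S *ᵥ x) := by
    rw [hSx]
    simp only [dotProduct]
    refine Finset.sum_congr rfl fun j _ => ?_
    have hj := hs0 j; have hπj := (hπ j).ne'
    field_simp
    linear_combination (c j)^2 * hss j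
  have hden : ∑ j, 1 / π j = x ⬝ᵥ x := by
    simp only [dotProduct, hx]
    refine Finset.sum_congr rfl fun j _ => ?_
    have hj := hs0 j; have hπj := (hπ j).ne'
    field_simp
    linear_combination hss j
  -- eigenvalue bound
  set r : ℝ := specRad M with hr
  set P : Matrix (Fin k) (Fin k) ℝ := Matrix.diagonal s with hP
  have hdetP : P.det ≠ 0 := by
    rw [hP, Matrix.det_diagonal]
    exact Finset.prod_ne_zero_iff.mpr fun i _ => hs0 i
  have hSP : S * P = P * M := by
    ext i j
    rw [hP, Matrix.mul_diagonal, Matrix.diagonal_mul, hSapp]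
    have hj := hs0 j
    field_simp
  have hrlam : ∀ i, |lam i| ≤ r := by
    intro i
    have h1 : lam i ∈ spectrum ℝ S := hS.eigenvalues_mem_spectrum_real i
    have hdetS : (algebraMap ℝ (Matrix (Fin k) (Fin k) ℝ) (lam i) - S).det = 0 := by
      rw [spectrum.mem_iff] at h1
      by_contra hne
      exact h1 ((Matrix.isUnit_iff_isUnit_det _).mpr (isUnit_iff_ne_zero.mpr hne))
    have hcomm : (algebraMap ℝ (Matrix (Fin k) (Fin k) ℝ) (lam i) - S) * P
        = P * (algebraMap ℝ (Matrix (Fin k) (Fin k) ℝ) (lam i) - M) := by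
      rw [sub_mul, mul_sub, hSP, Algebra.commutes]
    have hdetM : (algebraMap ℝ (Matrix (Fin k) (Fin k) ℝ) (lam i) - M).det = 0 := by
      have := congrArg Matrix.det hcomm
      rw [Matrix.det_mul, Matrix.det_mul, hdetS, zero_mul] at this
      exact (mul_eq_zero.mp this.symm).resolve_left hdetP
    have hmem := mem_complex_spectrum_of_det_eq_zero M (lam i) hdetM
    have habs : |lam i| = ‖((lam i : ℝ) : ℂ)‖ := by simp
    rw [habs]
    exact le_csSup (specSet_bddAbove M) ⟨_, hmem, rfl⟩
  have hr0 : 0 ≤ r := le_trans (abs_nonneg _) (hrlam ⟨0, hk⟩)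
  -- Rayleigh bound
  have hkey : (S *ᵥ x) ⬝ᵥ (S *ᵥ x) ≤ r ^ 2 * (x ⬝ᵥ x) := by
    have hxx : x ⬝ᵥ x = y ⬝ᵥ y := by
      conv_lhs => rw [hxy]
      exact hnorm y
    rw [hSx2, hnorm, hxx]
    have hDy : (D *ᵥ y) ⬝ᵥ (D *ᵥ y) = ∑ i, (lam i) ^ 2 * (y i) ^ 2 := by
      simp only [dotProduct, hD, Matrix.mulVec_diagonal, Function.comp_apply,
        RCLike.ofReal_real_eq_id, id_eq]
      exact Finset.sum_congr rfl fun i _ => by ring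
    rw [hDy, dotProduct, Finset.mul_sum]
    refine Finset.sum_le_sum fun i _ => ?_
    have h1 : (lam i) ^ 2 ≤ r ^ 2 := by
      rw [← sq_abs]
      exact pow_le_pow_left₀ (abs_nonneg _) (hrlam i) 2
    have : y i * y i = (y i) ^ 2 := by ring
    rw [this]
    exact mul_le_mul_of_nonneg_right h1 (sq_nonneg _)
  have hxx0 : 0 < x ⬝ᵥ x := by
    rw [← hden]
    refine Finset.sum_pos (fun j _ => by have := hπ j; positivity) ?_
    exact Finset.univ_nonempty_iff.mpr ⟨⟨0, hk⟩⟩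
  have hdiv : (∑ j, c j ^ 2 / π j) / (∑ j, 1 / π j) ≤ r ^ 2 := by
    rw [div_le_iff₀ (by rw [hden]; exact hxx0)]
    calc ∑ j, c j ^ 2 / π j = (S *ᵥ x) ⬝ᵥ (S *ᵥ x) := hnum
      _ ≤ r ^ 2 * (x ⬝ᵥ x) := hkey
      _ = r ^ 2 * ∑ j, 1 / π j := by rw [hden]
  calc Real.sqrt ((∑ j, c j ^ 2 / π j) / (∑ j, 1 / π j)) ≤ Real.sqrt (r ^ 2) :=
        Real.sqrt_le_sqrt hdiv
    _ = r := Real.sqrt_sq hr0
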